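/- Let g ≥ 2 and b > 1 be integers with gcd(b,g) = 1, let a be a positive integer with gcd(a,b) = 1 and a < b^k, and let k ≥ c_g(b). Then for every i with 0 ≤ i < ord_g(b^k) and every m ∈ {0,…,b−1} there is a unique n ∈ {0,…,b−1} such that (a·g^{i + m·ord_g(b^k)}) mod b^{k+1} = ((a·g^i) mod b^k) + n·b^k; moreover, for each fixed i, the resulting map m ↦ n is a bijection of {0,…,b−1} onto itself. -/

import Mathlib

noncomputable def ordg (g m : ℕ) : ℕ := sInf {n : ℕ | 0 < n ∧ g ^ n ≡ 1 [MOD m]}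

noncomputable def cg (g b : ℕ) : ℕ :=
  sInf {c : ℕ | 0 < c ∧ ∀ t : ℕ, 0 < t → ordg g (b ^ (c + t)) = b ^ t * ordg g (b ^ c)}

lemma ordg_mem {g m : ℕ} (hm : 0 < m) (h : Nat.Coprime g m) :
    0 < ordg g m ∧ g ^ ordg g m ≡ 1 [MOD m] :=
  Nat.sInf_mem (⟨m.totient, Nat.totient_pos.mpr hm, Nat.ModEq.pow_totient h⟩ :
    Set.Nonempty {n : ℕ | 0 < n ∧ g ^ n ≡ 1 [MOD m]})

lemma ordg_pos {g m : ℕ} (hm : 0 < m) (h : Nat.Coprime g m) : 0 < ordg g m :=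
  (ordg_mem hm h).1

lemma pow_ordg {g m : ℕ} (hm : 0 < m) (h : Nat.Coprime g m) : g ^ ordg g m ≡ 1 [MOD m] :=
  (ordg_mem hm h).2

lemma ordg_le {g m n : ℕ} (hn : 0 < n) (h : g ^ n ≡ 1 [MOD m]) : ordg g m ≤ n :=
  Nat.sInf_le ⟨hn, h⟩

lemma ordg_dvd_iff {g m n : ℕ} (hm : 0 < m) (h : Nat.Coprime g m) :
    ordg g m ∣ n ↔ g ^ n ≡ 1 [MOD m] := by
  constructor
  · rintro ⟨s, rfl⟩
    have := (pow_ordg hm h).pow s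
    rw [one_pow, ← pow_mul] at this
    exact this
  · intro hn
    have hd := Nat.div_add_mod n (ordg g m)
    set q := n / ordg g m
    set r := n % ordg g m
    have hgr : g ^ r ≡ 1 [MOD m] := by
      have : g ^ n = (g ^ ordg g m) ^ q * g ^ r := by
        rw [← pow_mul, ← pow_add, hd]
      have h2 : (g ^ ordg g m) ^ q * g ^ r ≡ 1 ^ q * g ^ r [MOD m] :=
        ((pow_ordg hm h).pow q).mul_right _
      rw [one_pow, one_mul] at h2
      exact (h2.symm.trans (this ▸ hn))
    rcases Nat.eq_zero_or_pos r with hr | hr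
    · exact Nat.dvd_of_mod_eq_zero hr
    · have := ordg_le hr hgr
      have := Nat.mod_lt n (ordg_pos hm h)
      omega

lemma ordg_dvd_ordg {g m m' : ℕ} (hm : 0 < m) (hm' : 0 < m') (hmm : m ∣ m')
    (h : Nat.Coprime g m) (h' : Nat.Coprime g m') : ordg g m ∣ ordg g m' := (ordg_dvd_iff hm h).mpr ((pow_ordg hm' h').of_dvd hmm)

lemma ordg_dvd_totient {g m : ℕ} (hm : 0 < m) (h : Nat.Coprime g m) :
    ordg g m ∣ m.totient :=
  (ordg_dvd_iff hm h).mpr (Nat.ModEq.pow_totient h)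

lemma one_add_pow (w : ℕ) : ∀ n : ℕ, ∃ E : ℕ, (1 + w) ^ n = 1 + n * w + w ^ 2 * E := by
  intro n
  induction n with
  | zero => exact ⟨0, by ring⟩
  | succ n ih =>
    obtain ⟨E, hE⟩ := ih
    exact ⟨E + n + w * E, by rw [pow_succ, hE]; ring⟩

lemma modulus_dvd_pow_sub_one {g m : ℕ} (hg : 1 ≤ g) (hm : 0 < m) (h : Nat.Coprime g m) :
    m ∣ g ^ ordg g m - 1 := by
  have := pow_ordg hm h
  exact (Nat.modEq_iff_dvd' (Nat.one_le_pow _ _ hg)).mp this.symm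

def IsGood (g b c : ℕ) : Prop :=
  2 ≤ c ∧ Nat.Coprime ((g ^ ordg g (b ^ c) - 1) / b ^ c) b

lemma onestep {g b c : ℕ} (hg : 2 ≤ g) (hb : 1 < b) (hcop : Nat.Coprime g b)
    (h : IsGood g b c) :
    ordg g (b ^ (c + 1)) = b * ordg g (b ^ c) ∧ IsGood g b (c + 1) := by
  obtain ⟨hc, hu⟩ := h
  set d := ordg g (b ^ c) with hd_def
  set w := g ^ d - 1 with hw_def
  set u := (g ^ d - 1) / b ^ c with hu_def
  have hbc1 : 1 < b ^ c := Nat.one_lt_pow (by omega) hb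
  have hbc1' : 1 < b ^ (c + 1) := Nat.one_lt_pow (by omega) hb
  have hcopc : Nat.Coprime g (b ^ c) := hcop.pow_right c
  have hcopc1 : Nat.Coprime g (b ^ (c + 1)) := hcop.pow_right (c + 1)
  have hd : 0 < d := ordg_pos (by omega) hcopc
  have hw_dvd : b ^ c ∣ w := modulus_dvd_pow_sub_one (by omega) (by omega) hcopc
  have hwu : w = b ^ c * u := (Nat.mul_div_cancel' hw_dvd).symm
  have hgd : g ^ d = 1 + w := by
    have : 1 ≤ g ^ d := Nat.one_le_pow _ _ (by omega)
    omega
  obtain ⟨E, hE⟩ := one_add_pow w b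
  have hcc : b ^ c * b ^ c = b ^ (c + 1) * b ^ (c - 1) := by
    rw [← pow_add, ← pow_add]
    congr 1
    omega
  have h2c : w ^ 2 = b ^ (c + 1) * (b ^ (c - 1) * u ^ 2) := by
    calc w ^ 2 = (b ^ c * b ^ c) * u ^ 2 := by rw [hwu]; ring
    _ = b ^ (c + 1) * (b ^ (c - 1) * u ^ 2) := by rw [hcc]; ring
  have hbw : b * w = b ^ (c + 1) * u := by rw [hwu, pow_succ]; ring
  have hgbd : g ^ (b * d) = 1 + b ^ (c + 1) * (u + b ^ (c - 1) * u ^ 2 * E) := by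
    rw [mul_comm b d, pow_mul, hgd, hE, hbw, h2c]
    ring
  -- part A : ordg g (b^(c+1)) ∣ b * d
  have hA : ordg g (b ^ (c + 1)) ∣ b * d := by
    rw [ordg_dvd_iff (by omega) hcopc1]
    have hsub : g ^ (b * d) - 1 = b ^ (c + 1) * (u + b ^ (c - 1) * u ^ 2 * E) := by
      rw [hgbd]
      omega
    have : (1 : ℕ) ≡ g ^ (b * d) [MOD b ^ (c + 1)] := by
      rw [Nat.modEq_iff_dvd' (Nat.one_le_pow _ _ (by omega))]
      rw [hsub]
      exact Dvd.intro _ rfl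
    exact this.symm
  -- part B : d ∣ ordg g (b^(c+1))
  have hB : d ∣ ordg g (b ^ (c + 1)) :=
    ordg_dvd_ordg (by omega) (by omega) (pow_dvd_pow b (by omega)) hcopc hcopc1
  obtain ⟨j, hj⟩ := hB
  have hjb : j ∣ b := by
    have : d * j ∣ d * b := by rw [← hj, mul_comm d b]; exact hA
    exact (mul_dvd_mul_iff_left (by omega : d ≠ 0)).mp this
  -- part C : b ∣ j
  obtain ⟨E', hE'⟩ := one_add_pow w j
  have h2cj : w ^ 2 = b ^ c * (b * (b ^ (c - 1) * u ^ 2)) := by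
    have hcc' : b ^ c * b ^ c = b ^ c * (b ^ (c - 1) * b) := by
      rw [← pow_succ]
      congr 2
      omega
    calc w ^ 2 = (b ^ c * b ^ c) * u ^ 2 := by rw [hwu]; ring
    _ = b ^ c * (b * (b ^ (c - 1) * u ^ 2)) := by rw [hcc']; ring
  have hjw : j * w = b ^ c * (j * u) := by rw [hwu]; ring
  have hgdj : g ^ (d * j) = 1 + b ^ c * (j * u + b * (b ^ (c - 1) * u ^ 2 * E')) := by
    rw [pow_mul, hgd, hE', hjw, h2cj]
    ring
  have hCmod : g ^ (d * j) ≡ 1 [MOD b ^ (c + 1)] := by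
    rw [← hj]
    exact pow_ordg (by omega) hcopc1
  have hCdvd : b ^ (c + 1) ∣ g ^ (d * j) - 1 :=
    (Nat.modEq_iff_dvd' (Nat.one_le_pow _ _ (by omega))).mp hCmod.symm
  have hbj : b ∣ j := by
    rw [hgdj] at hCdvd
    have h1 : b ^ (c + 1) ∣ b ^ c * (j * u + b * (b ^ (c - 1) * u ^ 2 * E')) := by
      have : 1 + b ^ c * (j * u + b * (b ^ (c - 1) * u ^ 2 * E')) - 1
          = b ^ c * (j * u + b * (b ^ (c - 1) * u ^ 2 * E')) := by omega
      rwa [this] at hCdvd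
    have h2 : b ∣ j * u + b * (b ^ (c - 1) * u ^ 2 * E') := by
      rw [pow_succ] at h1
      exact (mul_dvd_mul_iff_left (by omega : b ^ c ≠ 0)).mp h1
    have h3 : b ∣ j * u := (Nat.dvd_add_right (Dvd.intro _ rfl)).mp (by rwa [add_comm] at h2)
    exact (Nat.Coprime.dvd_of_dvd_mul_right (hu.symm) h3 : b ∣ j)
  have hjeq : j = b := Nat.dvd_antisymm hjb hbj
  have hmain : ordg g (b ^ (c + 1)) = b * d := by rw [hj, hjeq, mul_comm]
  refine ⟨hmain, by omega, ?_⟩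
  -- coprimality at next level
  have hval : g ^ ordg g (b ^ (c + 1)) - 1 = b ^ (c + 1) * (u + b ^ (c - 1) * u ^ 2 * E) := by
    rw [hmain, hgbd]
    omega
  have hdiv : (g ^ ordg g (b ^ (c + 1)) - 1) / b ^ (c + 1) = u + b ^ (c - 1) * u ^ 2 * E := by
    rw [hval]
    exact Nat.mul_div_cancel_left _ (by positivity)
  rw [hdiv]
  have : u + b ^ (c - 1) * u ^ 2 * E = u + b * (b ^ (c - 2) * u ^ 2 * E) := by
    have : b ^ (c - 1) = b * b ^ (c - 2) := by
      rw [← pow_succ']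
      congr 1
      omega
    rw [this]; ring
  rw [this]
  exact (Nat.coprime_add_mul_left_left u b _).mpr hu

lemma iterate_good {g b c : ℕ} (hg : 2 ≤ g) (hb : 1 < b) (hcop : Nat.Coprime g b)
    (h : IsGood g b c) :
    ∀ t : ℕ, ordg g (b ^ (c + t)) = b ^ t * ordg g (b ^ c) ∧ IsGood g b (c + t) := by
  intro t
  induction t with
  | zero => simpa using h
  | succ t ih =>
    obtain ⟨h1, h2⟩ := ih
    have := onestep hg hb hcop h2
    rw [show c + (t + 1) = (c + t) + 1 by omega]
    refine ⟨?_, this.2⟩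
    rw [this.1, h1, pow_succ]
    ring

/-- The base level for a prime. -/
noncomputable def cfun (g p : ℕ) : ℕ := (g ^ ordg g (p ^ 2) - 1).factorization p

lemma prime_base {g p : ℕ} (hg : 2 ≤ g) (hp : p.Prime) (hcop : Nat.Coprime g p) :
    2 ≤ cfun g p ∧ IsGood g p (cfun g p) := by
  have hp1 : 1 < p := hp.one_lt
  have hcop2 : Nat.Coprime g (p ^ 2) := hcop.pow_right 2
  have hp2 : 1 < p ^ 2 := Nat.one_lt_pow (by omega) hp1
  set D := ordg g (p ^ 2) with hD_def
  have hD : 0 < D := ordg_pos (by omega) hcop2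
  set w := g ^ D - 1 with hw_def
  have hw0 : w ≠ 0 := by
    have : 2 ≤ g ^ D := by
      calc 2 = 2 ^ 1 := by norm_num
      _ ≤ g ^ D := Nat.pow_le_pow_left (by omega) 1 |>.trans (Nat.pow_le_pow_right (by omega) hD)
    omega
  have hw_dvd : p ^ 2 ∣ w := modulus_dvd_pow_sub_one (by omega) (by omega) hcop2
  set s := w.factorization p with hs_def
  have hs2 : 2 ≤ s := (hp.pow_dvd_iff_le_factorization hw0).mp hw_dvd
  have hps_dvd : p ^ s ∣ w := Nat.ordProj_dvd w p
  have hps1 : 1 < p ^ s := Nat.one_lt_pow (by omega) hp1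
  have hcops : Nat.Coprime g (p ^ s) := hcop.pow_right s
  -- ordg g (p ^ s) = D
  have h1 : ordg g (p ^ s) ∣ D := by
    rw [ordg_dvd_iff (by omega) hcops]
    have : (1 : ℕ) ≡ g ^ D [MOD p ^ s] := by
      rw [Nat.modEq_iff_dvd' (Nat.one_le_pow _ _ (by omega))]
      exact hps_dvd
    exact this.symm
  have h2 : D ∣ ordg g (p ^ s) :=
    ordg_dvd_ordg (by omega) (by omega) (pow_dvd_pow p hs2) hcop2 hcops
  have hDs : ordg g (p ^ s) = D := Nat.dvd_antisymm h1 h2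
  have hcf : cfun g p = s := rfl
  rw [hcf]
  refine ⟨hs2, hs2, ?_⟩
  rw [hDs]
  have hnd : ¬ p ∣ w / p ^ s := by
    intro hdvd
    have : p ^ (s + 1) ∣ w := by
      obtain ⟨x, hx⟩ := hdvd
      have hwx : w = p ^ s * (p * x) := by
        rw [← hx]
        exact (Nat.mul_div_cancel' hps_dvd).symm
      exact ⟨x, by rw [hwx, pow_succ]; ring⟩
    exact Nat.pow_succ_factorization_not_dvd hw0 hp this
  exact ((Nat.Prime.coprime_iff_not_dvd hp).mpr hnd).symm

lemma pow_sub_one_dvd_pow_sub_one (g : ℕ) {m L : ℕ} (h : m ∣ L) :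
    g ^ m - 1 ∣ g ^ L - 1 := by
  obtain ⟨s, rfl⟩ := h
  have := Nat.sub_dvd_pow_sub_pow (g ^ m) 1 s
  rwa [one_pow, ← pow_mul] at this

lemma finset_lcm_ne_zero (s : Finset ℕ) (f : ℕ → ℕ) (hf : ∀ x ∈ s, f x ≠ 0) :
    s.lcm f ≠ 0 := by
  induction s using Finset.induction_on with
  | empty => simp
  | @insert a s ha ih =>
    rw [Finset.lcm_insert, lcm_eq_nat_lcm]
    exact Nat.lcm_ne_zero (hf a (Finset.mem_insert_self a s))
      (ih fun x hx => hf x (Finset.mem_insert_of_mem hx))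

lemma factorization_finset_lcm_le {p M : ℕ} (s : Finset ℕ) (f : ℕ → ℕ)
    (hf : ∀ x ∈ s, f x ≠ 0) (hM : ∀ x ∈ s, (f x).factorization p ≤ M) :
    (s.lcm f).factorization p ≤ M := by
  induction s using Finset.induction_on with
  | empty => simp
  | @insert a s ha ih =>
    rw [Finset.lcm_insert, lcm_eq_nat_lcm,
      Nat.factorization_lcm (hf a (Finset.mem_insert_self a s))
        (finset_lcm_ne_zero s f fun x hx => hf x (Finset.mem_insert_of_mem hx)),
      Finsupp.sup_apply]
    exact sup_le (hM a (Finset.mem_insert_self a s))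
      (ih (fun x hx => hf x (Finset.mem_insert_of_mem hx))
        (fun x hx => hM x (Finset.mem_insert_of_mem hx)))

lemma prime_ord_formula {g p : ℕ} (hg : 2 ≤ g) (hp : p.Prime) (hcop : Nat.Coprime g p)
    {m : ℕ} (hm : cfun g p ≤ m) :
    ordg g (p ^ m) = p ^ (m - cfun g p) * ordg g (p ^ cfun g p) := by
  obtain ⟨h2, hgood⟩ := prime_base hg hp hcop
  have := (iterate_good hg hp.one_lt hcop hgood (m - cfun g p)).1
  rwa [Nat.add_sub_cancel' hm] at this

lemma exists_good {g b : ℕ} (hg : 2 ≤ g) (hb : 1 < b) (hcop : Nat.Coprime g b) :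
    ∃ c : ℕ, 2 ≤ c ∧ IsGood g b c := by
  classical
  have hb0 : b ≠ 0 := by omega
  set pf := b.primeFactors with hpf
  set c := 2 + pf.sup (fun p => cfun g p + pf.sup (fun q => (q - 1).factorization p))
    with hc_def
  have hc2 : 2 ≤ c := by omega
  -- basic facts
  have hbc1 : 1 < b ^ c := Nat.one_lt_pow (by omega) hb
  have hcopbc : Nat.Coprime g (b ^ c) := hcop.pow_right c
  set d := ordg g (b ^ c) with hd_def
  have hd : 0 < d := ordg_pos (by omega) hcopbc
  set W := g ^ d - 1 with hW_def
  have hW0 : W ≠ 0 := by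
    have h1 : (2 : ℕ) ≤ 2 ^ d := Nat.one_lt_two_pow (by omega)
    have h2 : (2 : ℕ) ^ d ≤ g ^ d := Nat.pow_le_pow_left (by omega) d
    omega
  have hbW : b ^ c ∣ W := modulus_dvd_pow_sub_one (by omega) (by omega) hcopbc
  -- facts about primes of b
  have hfacts : ∀ p ∈ pf, p.Prime ∧ p ∣ b ∧ Nat.Coprime g p ∧ 1 ≤ b.factorization p ∧
      cfun g p ≤ c := by
    intro p hpm
    have pp : p.Prime := Nat.prime_of_mem_primeFactors hpm
    have hpb : p ∣ b := Nat.dvd_of_mem_primeFactors hpm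
    have hle : cfun g p + pf.sup (fun q => (q - 1).factorization p) ≤
        pf.sup (fun p => cfun g p + pf.sup (fun q => (q - 1).factorization p)) :=
      Finset.le_sup (f := fun p => cfun g p + pf.sup (fun q => (q - 1).factorization p)) hpm
    exact ⟨pp, hpb, Nat.Coprime.coprime_dvd_right hpb hcop,
      pp.factorization_pos_of_dvd hb0 hpb, by omega⟩
  -- the lcm
  set L := pf.lcm (fun q => ordg g (q ^ (c * b.factorization q))) with hL_def
  have hL0 : L ≠ 0 := by
    apply finset_lcm_ne_zero
    intro q hqm
    obtain ⟨qq, hqb, hgq, heq, -⟩ := hfacts q hqm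
    have : 1 < q ^ (c * b.factorization q) :=
      Nat.one_lt_pow (Nat.mul_pos (by omega) (by omega)).ne' qq.one_lt
    exact (ordg_pos (by omega) (hgq.pow_right _)).ne'
  have hdL : d ∣ L := by
    rw [hd_def, ordg_dvd_iff (by omega) hcopbc]
    have hdvd : b ^ c ∣ g ^ L - 1 := by
      rw [Nat.dvd_iff_prime_pow_dvd_dvd]
      intro p k hp hpk
      rcases Nat.eq_zero_or_pos k with rfl | hk
      · simpa using one_dvd _
      have pn : p.Prime := hp
      have hpb : p ∣ b := pn.dvd_of_dvd_pow ((dvd_pow_self p (by omega : k ≠ 0)).trans hpk)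
      have hpm : p ∈ pf := Nat.mem_primeFactors.mpr ⟨pn, hpb, hb0⟩
      have hkle : k ≤ c * b.factorization p := by
        have := (pn.pow_dvd_iff_le_factorization (pow_ne_zero c hb0)).mp hpk
        rwa [Nat.factorization_pow, Finsupp.smul_apply, smul_eq_mul] at this
      obtain ⟨-, -, hgp, -, -⟩ := hfacts p hpm
      calc p ^ k ∣ p ^ (c * b.factorization p) := pow_dvd_pow p hkle
      _ ∣ g ^ ordg g (p ^ (c * b.factorization p)) - 1 :=
          modulus_dvd_pow_sub_one (by omega) (pow_pos pn.pos _) (hgp.pow_right _)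
      _ ∣ g ^ L - 1 := pow_sub_one_dvd_pow_sub_one g (Finset.dvd_lcm hpm)
    have hgL1 : 1 ≤ g ^ L := Nat.one_le_pow _ _ (by omega)
    exact ((Nat.modEq_iff_dvd' hgL1).mpr hdvd).symm
  -- upper bound on valuations of W
  have hupper : ∀ p ∈ pf, ¬ p ^ (c * b.factorization p + 1) ∣ W := by
    intro p hpm hbad
    obtain ⟨pn, hpb, hgp, hep, hcfc⟩ := hfacts p hpm
    set cf := cfun g p with hcf_def
    set e := b.factorization p with he_def
    set m := c * e with hm_def
    have hcm : c ≤ m := Nat.le_mul_of_pos_right c (by omega)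
    have hcfm : cf ≤ m := le_trans hcfc hcm
    set A := ordg g (p ^ cf) with hA_def
    have hA0 : A ≠ 0 := by
      have : 1 < p ^ cf := Nat.one_lt_pow (by
        have := (prime_base hg pn hgp).1
        omega) pn.one_lt
      exact (ordg_pos (by omega) (hgp.pow_right _)).ne'
    set va := A.factorization p with hva_def
    -- lower bound on v_p(d)
    have hod : ordg g (p ^ (m + 1)) ∣ d := by
      rw [ordg_dvd_iff (pow_pos pn.pos _) (hgp.pow_right _)]
      have hgd1 : 1 ≤ g ^ d := Nat.one_le_pow _ _ (by omega)
      exact ((Nat.modEq_iff_dvd' hgd1).mpr hbad).symm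
    have hform : ordg g (p ^ (m + 1)) = p ^ (m + 1 - cf) * A :=
      prime_ord_formula hg pn hgp (by omega)
    have hvpow : ∀ j : ℕ, (p ^ j * A).factorization p = j + va := by
      intro j
      rw [Nat.factorization_mul (pow_ne_zero j pn.pos.ne') hA0, Finsupp.add_apply,
        pn.factorization_pow, Finsupp.single_eq_same]
    have hvd_ge : m + 1 - cf + va ≤ d.factorization p := by
      have hod' : p ^ (m + 1 - cf) * A ∣ d := by rw [← hform]; exact hod
      have hne : p ^ (m + 1 - cf) * A ≠ 0 := mul_ne_zero (pow_ne_zero _ pn.pos.ne') hA0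
      have h2 := Finsupp.le_def.mp
        ((Nat.factorization_le_iff_dvd hne (by omega)).mpr hod') p
      rwa [hvpow] at h2
    have hvL : L.factorization p ≤ (m - cf) + va := by
      apply factorization_finset_lcm_le
      · intro q hqm
        obtain ⟨qq, hqb, hgq, heq, -⟩ := hfacts q hqm
        have : 1 < q ^ (c * b.factorization q) := Nat.one_lt_pow (by nlinarith) qq.one_lt
        exact (ordg_pos (by omega) (hgq.pow_right _)).ne'
      · intro q hqm
        obtain ⟨qq, hqb, hgq, heq, hqcf⟩ := hfacts q hqm
        by_cases hqp : q = p
        · subst hqp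
          rw [prime_ord_formula hg pn hgp (le_trans hcfc hcm), hvpow]
        · -- cross term
          have hmq : 0 < c * b.factorization q := Nat.mul_pos (by omega) (by omega)
          have htot : ordg g (q ^ (c * b.factorization q)) ∣
              (q ^ (c * b.factorization q)).totient :=
            ordg_dvd_totient (pow_pos qq.pos _) (hgq.pow_right _)
          have htoteq : (q ^ (c * b.factorization q)).totient
              = q ^ (c * b.factorization q - 1) * (q - 1) := Nat.totient_prime_pow qq hmq
          have hord0 : ordg g (q ^ (c * b.factorization q)) ≠ 0 := by
            have : 1 < q ^ (c * b.factorization q) := Nat.one_lt_pow (by omega) qq.one_lt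
            exact (ordg_pos (by omega) (hgq.pow_right _)).ne'
          have htot0 : (q ^ (c * b.factorization q)).totient ≠ 0 :=
            (Nat.totient_pos.mpr (pow_pos qq.pos _)).ne'
          have hv1 : (ordg g (q ^ (c * b.factorization q))).factorization p ≤
              ((q ^ (c * b.factorization q)).totient).factorization p :=
            Finsupp.le_def.mp ((Nat.factorization_le_iff_dvd hord0 htot0).mpr htot) p
          have hq10 : q - 1 ≠ 0 := by have := qq.one_lt; omega
          have hv2 : ((q ^ (c * b.factorization q)).totient).factorization p
              = (q - 1).factorization p := by
            rw [htoteq, Nat.factorization_mul (pow_ne_zero _ qq.pos.ne') hq10,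
              Finsupp.add_apply, qq.factorization_pow,
              Finsupp.single_eq_of_ne' hqp, zero_add]
          have hv3 : (q - 1).factorization p ≤ pf.sup (fun q => (q - 1).factorization p) :=
            Finset.le_sup (f := fun q => (q - 1).factorization p) hqm
          have hle : cfun g p + pf.sup (fun q => (q - 1).factorization p) ≤
              pf.sup (fun p => cfun g p + pf.sup (fun q => (q - 1).factorization p)) :=
            Finset.le_sup (f := fun p => cfun g p + pf.sup (fun q => (q - 1).factorization p)) hpm
          omega
    have hvdL : d.factorization p ≤ L.factorization p :=
      Finsupp.le_def.mp ((Nat.factorization_le_iff_dvd (by omega) hL0).mpr hdL) p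
    omega
  -- conclude coprimality
  refine ⟨c, hc2, hc2, ?_⟩
  set U := (g ^ ordg g (b ^ c) - 1) / b ^ c with hU_def
  have hWU : W = b ^ c * U := (Nat.mul_div_cancel' hbW).symm
  by_contra hcon
  obtain ⟨r, hr, hrU, hrb⟩ := Nat.Prime.not_coprime_iff_dvd.mp hcon
  have hrm : r ∈ pf := Nat.mem_primeFactors.mpr ⟨hr, hrb, hb0⟩
  have h1 : r ^ (c * b.factorization r) ∣ b ^ c := by
    have h2 : (r ^ b.factorization r) ^ c ∣ b ^ c := pow_dvd_pow_of_dvd (Nat.ordProj_dvd b r) c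
    rwa [← pow_mul, mul_comm] at h2
  have : r ^ (c * b.factorization r + 1) ∣ W := by
    rw [pow_succ, hWU]
    exact mul_dvd_mul h1 hrU
  exact hupper r hrm this

lemma cg_mem {g b : ℕ} (hg : 2 ≤ g) (hb : 1 < b) (hcop : Nat.Coprime g b) :
    0 < cg g b ∧ ∀ t : ℕ, 0 < t →
      ordg g (b ^ (cg g b + t)) = b ^ t * ordg g (b ^ cg g b) := by
  have : cg g b ∈ {c : ℕ | 0 < c ∧ ∀ t : ℕ, 0 < t →
      ordg g (b ^ (c + t)) = b ^ t * ordg g (b ^ c)} := by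
    apply Nat.sInf_mem
    obtain ⟨c, hc2, hgood⟩ := exists_good hg hb hcop
    exact ⟨c, by omega, fun t _ => (iterate_good hg hb hcop hgood t).1⟩
  exact this

lemma ord_succ_of_le {g b k : ℕ} (hg : 2 ≤ g) (hb : 1 < b) (hcop : Nat.Coprime g b)
    (hk : cg g b ≤ k) : ordg g (b ^ (k + 1)) = b * ordg g (b ^ k) := by
  obtain ⟨hpos, hform⟩ := cg_mem hg hb hcop
  rcases eq_or_lt_of_le hk with heq | hlt
  · subst heq
    have := hform 1 one_pos
    rwa [pow_one] at this
  · have h1 := hform (k - cg g b) (by omega)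
    have h2 := hform (k + 1 - cg g b) (by omega)
    rw [show cg g b + (k - cg g b) = k by omega] at h1
    rw [show cg g b + (k + 1 - cg g b) = k + 1 by omega] at h2
    rw [h2, h1, show k + 1 - cg g b = (k - cg g b) + 1 by omega, pow_succ]
    ring

/-- For `k ≥ c_g(b)`, every remainder of `a/b^{k+1}` has the unique form
`(a·g^{i+m·ord_g(b^k)}) mod b^{k+1} = ((a·g^i) mod b^k) + n·b^k` with `m, n ∈ {0,…,b−1}`;
moreover, for each fixed `i` the resulting correspondence `m ↦ n` is a bijection of
`{0,…,b−1}` onto itself. -/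
theorem remainders_next_level (g b a k : ℕ) (hg : 2 ≤ g) (hb : 1 < b)
    (hbg : Nat.gcd b g = 1) (ha : 0 < a) (hab : Nat.gcd a b = 1) (hak : a < b ^ k)
    (hk : cg g b ≤ k) :
    ∀ i : ℕ, i < ordg g (b ^ k) →
      (∀ m : ℕ, m < b → ∃! n : ℕ, n < b ∧
        a * g ^ (i + m * ordg g (b ^ k)) % b ^ (k + 1) = a * g ^ i % b ^ k + n * b ^ k) ∧
      (∀ n : ℕ, n < b → ∃! m : ℕ, m < b ∧
        a * g ^ (i + m * ordg g (b ^ k)) % b ^ (k + 1) = a * g ^ i % b ^ k + n * b ^ k) := by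
  intro i _
  have hcop : Nat.Coprime g b := Nat.coprime_comm.mp hbg
  have hk1 : 1 ≤ k := by
    by_contra h
    have : k = 0 := by omega
    subst this
    simp at hak
    omega
  have hbk1 : 1 < b ^ k := Nat.one_lt_pow (by omega) hb
  have hbk1' : 1 < b ^ (k + 1) := Nat.one_lt_pow (by omega) hb
  have hbkpos : 0 < b ^ k := by omega
  have hcopk : Nat.Coprime g (b ^ k) := hcop.pow_right k
  have hcopk1 : Nat.Coprime g (b ^ (k + 1)) := hcop.pow_right (k + 1)
  set d := ordg g (b ^ k) with hd_def
  have hd : 0 < d := ordg_pos (by omega) hcopk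
  have hD : ordg g (b ^ (k + 1)) = b * d := ord_succ_of_le hg hb hcop hk
  set s := a * g ^ i % b ^ k with hs_def
  have hs_lt : s < b ^ k := Nat.mod_lt _ hbkpos
  -- the remainder function and its basic decomposition
  have key : ∀ m : ℕ, a * g ^ (i + m * d) % b ^ (k + 1) % b ^ k = s := by
    intro m
    have h1 : g ^ (m * d) ≡ 1 [MOD b ^ k] :=
      (ordg_dvd_iff (by omega) hcopk).mp (dvd_mul_left d m)
    have h2 : a * g ^ (i + m * d) ≡ a * g ^ i [MOD b ^ k] := by
      have : a * g ^ (i + m * d) = a * g ^ i * g ^ (m * d) := by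
        rw [pow_add]; ring
      rw [this]
      calc a * g ^ i * g ^ (m * d) ≡ a * g ^ i * 1 [MOD b ^ k] := h1.mul_left _
      _ = a * g ^ i := by ring
    have h3 := Nat.mod_mod_of_dvd (a * g ^ (i + m * d)) (pow_dvd_pow b (by omega : k ≤ k + 1))
    rw [h3]
    exact h2
  have hdecomp : ∀ m : ℕ,
      a * g ^ (i + m * d) % b ^ (k + 1)
        = s + (a * g ^ (i + m * d) % b ^ (k + 1) / b ^ k) * b ^ k := by
    intro m
    have h1 := Nat.mod_add_div' (a * g ^ (i + m * d) % b ^ (k + 1)) (b ^ k)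
    rw [key m] at h1
    exact h1.symm
  have hn_lt : ∀ m : ℕ, a * g ^ (i + m * d) % b ^ (k + 1) / b ^ k < b := by
    intro m
    have h1 : a * g ^ (i + m * d) % b ^ (k + 1) < b ^ (k + 1) := Nat.mod_lt _ (by omega)
    rw [pow_succ] at h1
    exact Nat.div_lt_of_lt_mul h1
  -- injectivity
  have hinj : ∀ m₁ m₂ : ℕ, m₁ < b → m₂ < b →
      a * g ^ (i + m₁ * d) % b ^ (k + 1) = a * g ^ (i + m₂ * d) % b ^ (k + 1) → m₁ = m₂ := by
    have main : ∀ m₁ m₂ : ℕ, m₂ ≤ m₁ → m₁ < b →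
        a * g ^ (i + m₁ * d) % b ^ (k + 1) = a * g ^ (i + m₂ * d) % b ^ (k + 1) → m₁ = m₂ := by
      intro m₁ m₂ hle hlt heq
      have hsplit : m₂ * d + (m₁ - m₂) * d = m₁ * d := by
        rw [← Nat.add_mul]
        congr 1
        omega
      have hiexp : i + m₁ * d = (i + m₂ * d) + (m₁ - m₂) * d := by omega
      have hpow : a * g ^ (i + m₁ * d) = a * g ^ (i + m₂ * d) * g ^ ((m₁ - m₂) * d) := by
        rw [hiexp, pow_add]
        ring
      have hmodeq : a * g ^ (i + m₂ * d) * g ^ ((m₁ - m₂) * d)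
          ≡ a * g ^ (i + m₂ * d) * 1 [MOD b ^ (k + 1)] := by
        show _ % _ = _ % _
        rw [mul_one, ← hpow]
        exact heq
      have hcopm : Nat.Coprime (b ^ (k + 1)) (a * g ^ (i + m₂ * d)) := by
        have h1 : Nat.Coprime a (b ^ (k + 1)) := (Nat.Coprime.pow_right _ hab)
        have h2 : Nat.Coprime (g ^ (i + m₂ * d)) (b ^ (k + 1)) :=
          Nat.Coprime.pow_left _ hcopk1
        exact (Nat.Coprime.mul h1 h2).symm
      have hcancel : g ^ ((m₁ - m₂) * d) ≡ 1 [MOD b ^ (k + 1)] :=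
        Nat.ModEq.cancel_left_of_coprime hcopm hmodeq
      have hdvd : b * d ∣ (m₁ - m₂) * d := by
        rw [← hD]
        exact (ordg_dvd_iff (by omega) hcopk1).mpr hcancel
      have hbdvd : b ∣ m₁ - m₂ := by
        obtain ⟨t, ht⟩ := hdvd
        refine ⟨t, Nat.eq_of_mul_eq_mul_right hd ?_⟩
        rw [ht]
        ring
      have : m₁ - m₂ = 0 := by
        rcases Nat.eq_zero_or_pos (m₁ - m₂) with h | h
        · exact h
        · have := Nat.le_of_dvd h hbdvd
          omega
      omega
    intro m₁ m₂ h1 h2 heq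
    rcases le_total m₂ m₁ with h | h
    · exact main m₁ m₂ h h1 heq
    · exact (main m₂ m₁ h h2 heq.symm).symm
  refine ⟨?_, ?_⟩
  · intro m hm
    refine ⟨a * g ^ (i + m * d) % b ^ (k + 1) / b ^ k, ⟨hn_lt m, hdecomp m⟩, ?_⟩
    rintro y ⟨hy, hyeq⟩
    have h1 := hdecomp m
    have h2 : y * b ^ k = (a * g ^ (i + m * d) % b ^ (k + 1) / b ^ k) * b ^ k := by omega
    exact Nat.eq_of_mul_eq_mul_right hbkpos h2
  · intro n hn
    set F : Fin b → Fin b :=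
      fun m => ⟨a * g ^ (i + m.val * d) % b ^ (k + 1) / b ^ k, hn_lt m.val⟩ with hF_def
    have hFinj : Function.Injective F := by
      intro m₁ m₂ hF
      have hval : a * g ^ (i + m₁.val * d) % b ^ (k + 1) / b ^ k
          = a * g ^ (i + m₂.val * d) % b ^ (k + 1) / b ^ k := by
        have : (F m₁).val = (F m₂).val := by rw [hF]
        simpa [hF_def] using this
      have h1 : a * g ^ (i + m₁.val * d) % b ^ (k + 1)
          = a * g ^ (i + m₂.val * d) % b ^ (k + 1) := by
        rw [hdecomp m₁.val, hdecomp m₂.val, hval]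
      exact Fin.ext (hinj _ _ m₁.isLt m₂.isLt h1)
    have hFsurj : Function.Surjective F := Finite.surjective_of_injective hFinj
    obtain ⟨m, hmF⟩ := hFsurj ⟨n, hn⟩
    have hmn : a * g ^ (i + m.val * d) % b ^ (k + 1) / b ^ k = n := by
      have : (F m).val = n := by rw [hmF]
      simpa [hF_def] using this
    refine ⟨m.val, ⟨m.isLt, ?_⟩, ?_⟩
    · rw [hdecomp m.val, hmn]
    · rintro y ⟨hy, hyeq⟩
      have hyd := hdecomp y
      have h2 : n * b ^ k = (a * g ^ (i + y * d) % b ^ (k + 1) / b ^ k) * b ^ k := by omega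
      have hyn : a * g ^ (i + y * d) % b ^ (k + 1) / b ^ k = n :=
        (Nat.eq_of_mul_eq_mul_right hbkpos h2).symm
      have heqr : a * g ^ (i + y * d) % b ^ (k + 1)
          = a * g ^ (i + m.val * d) % b ^ (k + 1) := by
        rw [hdecomp y, hdecomp m.val, hyn, hmn]
      exact hinj y m.val hy m.isLt heqr
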